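/- Let 0 < T_e < ℓ < T_r be real numbers. There exist real numbers t and z with z ≥ 0 satisfying ℓ² + z² ≤ t², z² ≤ (T_r − t)² with t ≤ T_r, and z² ≥ (T_e − t)², if and only if T_e · T_r ≥ ℓ². -/
import Mathlib

theorem stmt_2 (Te ℓ Tr : ℝ) (h0 : 0 < Te) (h1 : Te < ℓ) (h2 : ℓ < Tr) :
    (∃ t z : ℝ, 0 ≤ z ∧ ℓ ^ 2 + z ^ 2 ≤ t ^ 2 ∧ z ^ 2 ≤ (Tr - t) ^ 2 ∧ t ≤ Tr ∧
      (Te - t) ^ 2 ≤ z ^ 2) ↔ ℓ ^ 2 ≤ Te * Tr := by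
  constructor
  · rintro ⟨t, z, hz, ha, hb, hc, hd⟩
    have ht : 0 < t := by nlinarith
    have h5 : t - z ≤ Te := by nlinarith
    have h6 : t + z ≤ Tr := by nlinarith
    have h7 : z < t := by nlinarith
    nlinarith [mul_le_mul h5 h6 (by nlinarith) h0.le]
  · intro h
    exact ⟨(Te + Tr) / 2, (Tr - Te) / 2, by nlinarith, by nlinarith, by nlinarith,
      by nlinarith, by nlinarith⟩
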